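/- The reality condition for the quantum Hodge operator: given nonzero complex numbers α, β, γ and nonzero m ∈ ℝ, one has T(x*) = (T(x))* for all x ∈ Λ¹ if and only if β = q⁶ · conj(α) and γ ∈ ℝ. -/

import Mathlib

open TensorProduct

noncomputable section

/-- The 3-dimensional complex vector space with basis `ω 0 = ω₋`, `ω 1 = ω₊`, `ω 2 = ω_z`. -/
abbrev V : Type := Fin 3 → ℂ

/-- The distinguished basis `(ω₋, ω₊, ω_z)` of `V`. -/
def ω : Fin 3 → V := fun i => Pi.basisFun ℂ (Fin 3) i

/-- The degree-2 relations of the exterior algebra of the 3d calculus: each generator is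
set equal to `0`.  `RingQuot` of this relation is the quotient of the tensor algebra by the
two-sided ideal generated by the six elements. -/
inductive rel (q : ℝ) : TensorAlgebra ℂ V → TensorAlgebra ℂ V → Prop
  | mm : rel q (TensorAlgebra.ι ℂ (ω 0) * TensorAlgebra.ι ℂ (ω 0)) 0
  | pp : rel q (TensorAlgebra.ι ℂ (ω 1) * TensorAlgebra.ι ℂ (ω 1)) 0
  | zz : rel q (TensorAlgebra.ι ℂ (ω 2) * TensorAlgebra.ι ℂ (ω 2)) 0
  | mp : rel q (TensorAlgebra.ι ℂ (ω 0) * TensorAlgebra.ι ℂ (ω 1) +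
      ((q : ℂ) ^ 2)⁻¹ • (TensorAlgebra.ι ℂ (ω 1) * TensorAlgebra.ι ℂ (ω 0))) 0
  | zm : rel q (TensorAlgebra.ι ℂ (ω 2) * TensorAlgebra.ι ℂ (ω 0) +
      (q : ℂ) ^ 4 • (TensorAlgebra.ι ℂ (ω 0) * TensorAlgebra.ι ℂ (ω 2))) 0
  | zp : rel q (TensorAlgebra.ι ℂ (ω 2) * TensorAlgebra.ι ℂ (ω 1) +
      ((q : ℂ) ^ 4)⁻¹ • (TensorAlgebra.ι ℂ (ω 1) * TensorAlgebra.ι ℂ (ω 2))) 0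

/-- The exterior algebra `Λ` of the 3d calculus. -/
abbrev Lam (q : ℝ) : Type := RingQuot (rel q)

/-- The quotient map `T(V) → Λ`. -/
def mkL (q : ℝ) : TensorAlgebra ℂ V →ₐ[ℂ] Lam q := RingQuot.mkAlgHom ℂ (rel q)

/-- The degree-`k` component `Λᵏ` of `Λ`: the image of the `k`-th power of the degree-1
part of the tensor algebra (the grading induced from the tensor algebra). -/
def gradeL (q : ℝ) (k : ℕ) : Submodule ℂ (Lam q) :=
  Submodule.map (mkL q).toLinearMap
    ((LinearMap.range (TensorAlgebra.ι ℂ : V →ₗ[ℂ] TensorAlgebra ℂ V)) ^ k)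

/-- The images `ω₋, ω₊, ω_z` of the basis 1-forms in `Λ¹`. -/
def ωL (q : ℝ) (a : Fin 3) : Lam q := mkL q (TensorAlgebra.ι ℂ (ω a))

/-- `f₋ = ω₋∧ω_z ∈ Λ²`. -/
def fm (q : ℝ) : Lam q := mkL q (TensorAlgebra.ι ℂ (ω 0) * TensorAlgebra.ι ℂ (ω 2))

/-- `f₊ = ω₊∧ω_z ∈ Λ²`. -/
def fp (q : ℝ) : Lam q := mkL q (TensorAlgebra.ι ℂ (ω 1) * TensorAlgebra.ι ℂ (ω 2))

/-- `f_z = ω₋∧ω₊ ∈ Λ²`. -/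
def fz (q : ℝ) : Lam q := mkL q (TensorAlgebra.ι ℂ (ω 0) * TensorAlgebra.ι ℂ (ω 1))

/-- The top form `θ = ω₋∧ω₊∧ω_z ∈ Λ³`. -/
def θL (q : ℝ) : Lam q :=
  mkL q (TensorAlgebra.ι ℂ (ω 0) * TensorAlgebra.ι ℂ (ω 1) * TensorAlgebra.ι ℂ (ω 2))

/-- `λ₂ = 1 + q²`. -/
def lam2 (q : ℝ) : ℂ := 1 + (q : ℂ) ^ 2

/-- `λ₃ = 1 + 2q² + 2q⁴ + q⁶`. -/
def lam3 (q : ℝ) : ℂ := 1 + 2 * (q : ℂ) ^ 2 + 2 * (q : ℂ) ^ 4 + (q : ℂ) ^ 6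

/-- `T : Λ → Λ` is the Hodge operator of the left-invariant contraction
`g(ω₋,ω₊) = α`, `g(ω₊,ω₋) = β`, `g(ω_z,ω_z) = γ` with volume form `μ = mθ`: these
equations pin down `T` on the basis `1, ω₋, ω₊, ω_z, f₋, f₊, f_z, θ` of `Λ`. -/
def IsHodge (q : ℝ) (α β γ m : ℂ) (T : Lam q →ₗ[ℂ] Lam q) : Prop :=
  T 1 = m • θL q ∧
  T (ωL q 0) = (-(((q : ℂ) ^ 2)⁻¹ * m * β)) • fm q ∧
  T (ωL q 1) = (m * α) • fp q ∧
  T (ωL q 2) = (m * γ) • fz q ∧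
  T (fm q) = (2 * ((q : ℂ) ^ 4)⁻¹ * (lam2 q)⁻¹ * m * β * γ) • ωL q 0 ∧
  T (fp q) = (-(2 * (q : ℂ) ^ 6 * (lam2 q)⁻¹ * m * α * γ)) • ωL q 1 ∧
  T (fz q) = (-(2 * (lam2 q)⁻¹ * m * α * β)) • ωL q 2 ∧
  T (θL q) = (-(6 * (q : ℂ) ^ 4 * (lam3 q)⁻¹ * m * α * β * γ)) • (1 : Lam q)

/-- `st : Λ → Λ` is the antilinear involution determined by the `*`-structure of the
calculus: these equations pin down `st` on the basis `1, ω₋, ω₊, ω_z, f₋, f₊, f_z, θ`. -/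
def IsStar (q : ℝ) (st : Lam q →ₛₗ[starRingEnd ℂ] Lam q) : Prop :=
  st 1 = 1 ∧
  st (ωL q 0) = -ωL q 1 ∧
  st (ωL q 1) = -ωL q 0 ∧
  st (ωL q 2) = -ωL q 2 ∧
  st (fm q) = ((q : ℂ) ^ 4)⁻¹ • fp q ∧
  st (fp q) = (q : ℂ) ^ 4 • fm q ∧
  st (fz q) = -fz q ∧
  st (θL q) = θL q


/-! ### Auxiliary: a matrix representation of `Lam q` -/

open Kronecker in
abbrev MA : Type := Matrix ((Fin 2 × Fin 2) × Fin 2) ((Fin 2 × Fin 2) × Fin 2) ℂ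

def E : Matrix (Fin 2) (Fin 2) ℂ := !![0,1;0,0]
def D (c : ℂ) : Matrix (Fin 2) (Fin 2) ℂ := !![1,0;0,c]

lemma E_mul_E : E * E = 0 := by
  simp only [E, Matrix.mul_fin_two]; ext i j; fin_cases i <;> fin_cases j <;> simp
lemma D_mul_E (c : ℂ) : D c * E = E := by simp only [D, E, Matrix.mul_fin_two]; norm_num
lemma E_mul_D (c : ℂ) : E * D c = c • E := by
  simp only [D, E, Matrix.mul_fin_two]; ext i j; fin_cases i <;> fin_cases j <;> simp
lemma D_mul_D (c d : ℂ) : D c * D d = D (c*d) := by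
  simp only [D, Matrix.mul_fin_two]; norm_num

open Kronecker

lemma neg_kron {l m n p : Type} [Fintype l] [Fintype m] [Fintype n] [Fintype p]
    (A : Matrix l m ℂ) (B : Matrix n p ℂ) : (-A) ⊗ₖ B = -(A ⊗ₖ B) := by
  rw [← neg_one_smul ℂ A, Matrix.smul_kronecker, neg_one_smul]
lemma kron_neg {l m n p : Type} [Fintype l] [Fintype m] [Fintype n] [Fintype p]
    (A : Matrix l m ℂ) (B : Matrix n p ℂ) : A ⊗ₖ (-B) = -(A ⊗ₖ B) := by
  rw [← neg_one_smul ℂ B, Matrix.kronecker_smul, neg_one_smul]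

def Xm : MA := (E ⊗ₖ 1) ⊗ₖ 1
def Xp (q : ℝ) : MA := (D (-((q:ℂ)^2)⁻¹) ⊗ₖ E) ⊗ₖ 1
def Xz (q : ℝ) : MA := (D (-((q:ℂ)^4)⁻¹) ⊗ₖ D (-(q:ℂ)^4)) ⊗ₖ E

attribute [local simp] Matrix.smul_kronecker Matrix.kronecker_smul Matrix.zero_kronecker
  Matrix.kronecker_zero neg_kron kron_neg E_mul_E D_mul_E E_mul_D D_mul_D

lemma Xm_Xm : Xm * Xm = 0 := by
  simp [Xm, ← Matrix.mul_kronecker_mul]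
lemma Xp_Xp (q : ℝ) : Xp q * Xp q = 0 := by
  simp [Xp, ← Matrix.mul_kronecker_mul]
lemma Xz_Xz (q : ℝ) : Xz q * Xz q = 0 := by
  simp [Xz, ← Matrix.mul_kronecker_mul]
lemma Xm_mul_Xp (q : ℝ) : Xm * Xp q = (-((q:ℂ)^2)⁻¹) • ((E ⊗ₖ E) ⊗ₖ 1) := by
  simp [Xm, Xp, ← Matrix.mul_kronecker_mul]
lemma Xp_mul_Xm (q : ℝ) : Xp q * Xm = (E ⊗ₖ E) ⊗ₖ 1 := by
  simp [Xm, Xp, ← Matrix.mul_kronecker_mul]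
lemma Xz_mul_Xm (q : ℝ) : Xz q * Xm = (E ⊗ₖ D (-(q:ℂ)^4)) ⊗ₖ E := by
  simp [Xm, Xz, ← Matrix.mul_kronecker_mul]
lemma Xm_mul_Xz (q : ℝ) : Xm * Xz q = (-((q:ℂ)^4)⁻¹) • ((E ⊗ₖ D (-(q:ℂ)^4)) ⊗ₖ E) := by
  simp [Xm, Xz, ← Matrix.mul_kronecker_mul]
lemma Xz_mul_Xp (q : ℝ) : Xz q * Xp q = (D (((q:ℂ)^2)⁻¹ * ((q:ℂ)^4)⁻¹) ⊗ₖ E) ⊗ₖ E := by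
  simp [Xp, Xz, ← Matrix.mul_kronecker_mul]; rw [mul_comm]
lemma Xp_mul_Xz (q : ℝ) : Xp q * Xz q =
    (-(q:ℂ)^4) • ((D (((q:ℂ)^2)⁻¹ * ((q:ℂ)^4)⁻¹) ⊗ₖ E) ⊗ₖ E) := by
  simp [Xp, Xz, ← Matrix.mul_kronecker_mul]

lemma rel_mp' (q : ℝ) : Xm * Xp q + ((q:ℂ)^2)⁻¹ • (Xp q * Xm) = 0 := by
  rw [Xm_mul_Xp, Xp_mul_Xm, neg_smul, neg_add_cancel]
lemma rel_zm' (q : ℝ) (hq : (q:ℂ) ≠ 0) : Xz q * Xm + ((q:ℂ)^4) • (Xm * Xz q) = 0 := by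
  rw [Xz_mul_Xm, Xm_mul_Xz, smul_smul, mul_neg, mul_inv_cancel₀ (pow_ne_zero 4 hq), neg_smul,
    one_smul, add_neg_cancel]
lemma rel_zp' (q : ℝ) (hq : (q:ℂ) ≠ 0) : Xz q * Xp q + (((q:ℂ)^4))⁻¹ • (Xp q * Xz q) = 0 := by
  rw [Xz_mul_Xp, Xp_mul_Xz, smul_smul, mul_neg, inv_mul_cancel₀ (pow_ne_zero 4 hq), neg_smul,
    one_smul, add_neg_cancel]

def fLin (q : ℝ) : V →ₗ[ℂ] MA where
  toFun v := v 0 • Xm + v 1 • Xp q + v 2 • Xz q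
  map_add' u v := by simp only [Pi.add_apply, add_smul]; abel
  map_smul' c v := by simp only [Pi.smul_apply, smul_eq_mul, mul_smul, smul_add,
    RingHom.id_apply]

lemma fLin_ω0 (q : ℝ) : fLin q (ω 0) = Xm := by simp [fLin, ω, Pi.basisFun_apply]
lemma fLin_ω1 (q : ℝ) : fLin q (ω 1) = Xp q := by simp [fLin, ω, Pi.basisFun_apply]
lemma fLin_ω2 (q : ℝ) : fLin q (ω 2) = Xz q := by simp [fLin, ω, Pi.basisFun_apply]

/-- The representation `Lam q → MA`. -/
def phi (q : ℝ) (hq : (q:ℂ) ≠ 0) : Lam q →ₐ[ℂ] MA :=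
  RingQuot.liftAlgHom ℂ ⟨TensorAlgebra.lift ℂ (fLin q), by
    intro x y h
    cases h <;>
      simp only [map_mul, map_add, map_smul, map_zero, TensorAlgebra.lift_ι_apply,
        fLin_ω0, fLin_ω1, fLin_ω2]
    · exact Xm_Xm
    · exact Xp_Xp q
    · exact Xz_Xz q
    · exact rel_mp' q
    · exact rel_zm' q hq
    · exact rel_zp' q hq⟩

lemma phi_mk (q : ℝ) (hq : (q:ℂ) ≠ 0) (x : TensorAlgebra ℂ V) :
    phi q hq (mkL q x) = TensorAlgebra.lift ℂ (fLin q) x := by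
  rw [_root_.mkL, phi, RingQuot.liftAlgHom_mkAlgHom_apply]

lemma fm_ne_zero (q : ℝ) (hq : (q:ℂ) ≠ 0) : fm q ≠ 0 := by
  intro h
  have h2 : phi q hq (fm q) = 0 := by rw [h, map_zero]
  rw [fm, phi_mk, map_mul, TensorAlgebra.lift_ι_apply, TensorAlgebra.lift_ι_apply,
    fLin_ω0, fLin_ω2, Xm_mul_Xz] at h2
  have := congrFun (congrFun h2 ((0,0),0)) ((1,0),1)
  simp [Matrix.kroneckerMap_apply, E, D, hq, Matrix.smul_apply] at this

lemma fp_ne_zero (q : ℝ) (hq : (q:ℂ) ≠ 0) : fp q ≠ 0 := by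
  intro h
  have h2 : phi q hq (fp q) = 0 := by rw [h, map_zero]
  rw [fp, phi_mk, map_mul, TensorAlgebra.lift_ι_apply, TensorAlgebra.lift_ι_apply,
    fLin_ω1, fLin_ω2, Xp_mul_Xz] at h2
  have := congrFun (congrFun h2 ((0,0),0)) ((0,1),1)
  simp [Matrix.kroneckerMap_apply, E, D, hq, Matrix.smul_apply] at this

lemma fz_ne_zero (q : ℝ) (hq : (q:ℂ) ≠ 0) : fz q ≠ 0 := by
  intro h
  have h2 : phi q hq (fz q) = 0 := by rw [h, map_zero]
  rw [fz, phi_mk, map_mul, TensorAlgebra.lift_ι_apply, TensorAlgebra.lift_ι_apply,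
    fLin_ω0, fLin_ω1, Xm_mul_Xp] at h2
  have := congrFun (congrFun h2 ((0,0),0)) ((1,1),0)
  simp [Matrix.kroneckerMap_apply, E, Matrix.smul_apply, Matrix.one_apply, hq] at this

lemma ωL_mem_grade1 (q : ℝ) (a : Fin 3) : ωL q a ∈ gradeL q 1 := by
  rw [gradeL, pow_one]
  exact ⟨TensorAlgebra.ι ℂ (ω a), ⟨ω a, rfl⟩, rfl⟩

lemma mem_grade1 (q : ℝ) {x : Lam q} (hx : x ∈ gradeL q 1) :
    ∃ v : V, x = mkL q (TensorAlgebra.ι ℂ v) := by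
  rw [gradeL, pow_one] at hx
  obtain ⟨y, ⟨v, rfl⟩, rfl⟩ := hx
  exact ⟨v, rfl⟩

lemma ι_expand (q : ℝ) (v : V) :
    mkL q (TensorAlgebra.ι ℂ v) = v 0 • ωL q 0 + v 1 • ωL q 1 + v 2 • ωL q 2 := by
  have hv : v 0 • ω 0 + v 1 • ω 1 + v 2 • ω 2 = v := by
    funext j
    fin_cases j <;> simp [ω, Pi.basisFun_apply]
  calc mkL q (TensorAlgebra.ι ℂ v)
      = mkL q (TensorAlgebra.ι ℂ (v 0 • ω 0 + v 1 • ω 1 + v 2 • ω 2)) := by rw [hv]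
    _ = v 0 • ωL q 0 + v 1 • ωL q 1 + v 2 • ωL q 2 := by
        simp [map_add, map_smul, ωL]

/-- the reality condition `T(x*) = (T(x))*` on `Λ¹` holds
if and only if `β = q⁶ conj(α)` and `γ ∈ ℝ`. -/
theorem hodge_real_iff (q : ℝ) (hq0 : 0 < q) (hq1 : q < 1)
    (α β γ : ℂ) (m : ℝ) (hα : α ≠ 0) (hβ : β ≠ 0) (hγ : γ ≠ 0) (hm : m ≠ 0)
    (T : Lam q →ₗ[ℂ] Lam q) (hT : IsHodge q α β γ (m : ℂ) T)
    (st : Lam q →ₛₗ[starRingEnd ℂ] Lam q) (hst : IsStar q st) :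
    (∀ x ∈ gradeL q 1, T (st x) = st (T x)) ↔
      (β = (q : ℂ) ^ 6 * (starRingEnd ℂ) α ∧ (starRingEnd ℂ) γ = γ) := by
  obtain ⟨hT1, hTm, hTp, hTz, hTfm, hTfp, hTfz, hTθ⟩ := hT
  obtain ⟨hs1, hsm, hsp, hsz, hsfm, hsfp, hsfz, hsθ⟩ := hst
  have hq : (q:ℂ) ≠ 0 := by exact_mod_cast hq0.ne'
  have hmC : (m:ℂ) ≠ 0 := Complex.ofReal_ne_zero.mpr hm
  have smul_cancel : ∀ {c : ℂ} {x : Lam q}, c • x = 0 → x ≠ 0 → c = 0 := by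
    intro c x h hx
    by_contra hc
    have h1 : c⁻¹ • c • x = x := by rw [smul_smul, inv_mul_cancel₀ hc, one_smul]
    have h2 : c⁻¹ • c • x = 0 := by rw [h, smul_zero]
    exact hx (h1.symm.trans h2)
  constructor
  · intro h
    have h0 := h (ωL q 0) (ωL_mem_grade1 q 0)
    have h2 := h (ωL q 2) (ωL_mem_grade1 q 2)
    rw [hsm, map_neg, hTp, hTm, map_smulₛₗ, hsfm, smul_smul] at h0
    rw [hsz, map_neg, hTz, map_smulₛₗ, hsfz, smul_neg] at h2
    have h0' : (-((m:ℂ) * α)) • fp q =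
        ((starRingEnd ℂ) (-(((q:ℂ)^2)⁻¹ * m * β)) * ((q:ℂ)^4)⁻¹) • fp q :=
      (neg_smul ((m:ℂ) * α) (fp q)).trans h0
    have h2' : (-((m:ℂ) * γ)) • fz q = (-(starRingEnd ℂ) ((m:ℂ) * γ)) • fz q :=
      (neg_smul ((m:ℂ) * γ) (fz q)).trans (h2.trans (neg_smul ((starRingEnd ℂ) ((m:ℂ) * γ)) (fz q)).symm)
    have e0 := smul_cancel ((sub_smul _ _ (fp q)).trans (sub_eq_zero.mpr h0'))
      (fp_ne_zero q hq)
    have e2 := smul_cancel ((sub_smul _ _ (fz q)).trans (sub_eq_zero.mpr h2'))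
      (fz_ne_zero q hq)
    simp only [map_neg, map_mul, map_inv₀, map_pow, Complex.conj_ofReal] at e0 e2
    constructor
    · have e0' : (m:ℂ) * (β - (q:ℂ)^6 * (starRingEnd ℂ) α) = 0 := by
        have ec := congrArg (starRingEnd ℂ) e0
        simp only [map_sub, map_neg, map_mul, map_inv₀, map_pow, map_zero,
          Complex.conj_ofReal, Complex.conj_conj] at ec
        field_simp at ec
        linear_combination ec
      rcases mul_eq_zero.mp e0' with h | h
      · exact absurd h hmC
      · exact sub_eq_zero.mp h
    · have e2' : (m:ℂ) * ((starRingEnd ℂ) γ - γ) = 0 := by linear_combination e2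
      rcases mul_eq_zero.mp e2' with h | h
      · exact absurd h hmC
      · exact sub_eq_zero.mp h
  · rintro ⟨hb, hg⟩ x hx
    obtain ⟨v, rfl⟩ := mem_grade1 q hx
    have hb' : (starRingEnd ℂ) β = (q:ℂ)^6 * α := by
      rw [hb]; simp [map_mul, map_pow, Complex.conj_ofReal, mul_comm]
    rw [ι_expand]
    simp only [map_add, map_smul, map_smulₛₗ, hsm, hsp, hsz, map_neg, hTm, hTp, hTz,
      hsfm, hsfp, hsfz, smul_neg, smul_smul]
    simp only [map_mul, map_neg, map_inv₀, map_pow, Complex.conj_ofReal,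
      Complex.conj_conj, hb, hg]
    match_scalars <;> field_simp <;> ring


end
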